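/- Let G be a graph, C a set of edges whose removal disconnects G, and M a connected component of G−C. If G has a K_n-immersion in which k terminals lie in G−M and j terminals lie in M, then |C| ≥ k·j. -/

import Mathlib

set_option linter.unusedVariables false

open SimpleGraph

/-- A graph `G` has a `K_t`-immersion: `t` terminal vertices (injective `φ`) together with
pairwise edge-disjoint paths joining every pair of terminals. -/
def HasCliqueImmersion {V : Type*} (G : SimpleGraph V) (t : ℕ) : Prop :=
  ∃ φ : Fin t → V, Function.Injective φ ∧
    ∃ P : ∀ i j : Fin t, G.Walk (φ i) (φ j),
      (∀ i j : Fin t, i < j → (P i j).IsPath) ∧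
      (∀ i j k l : Fin t, i < j → k < l → (i, j) ≠ (k, l) →
        List.Disjoint (P i j).edges (P k l).edges)

/-- The immersion number of `G`: the largest `t` such that `G` has a `K_t`-immersion. -/
noncomputable def immersionNumber {V : Type*} (G : SimpleGraph V) : ℕ :=
  sSup {t | HasCliqueImmersion G t}

/-- Lexicographic product. -/
def lexProd {α β : Type*} (G : SimpleGraph α) (H : SimpleGraph β) :
    SimpleGraph (α × β) where
  Adj x y := G.Adj x.1 y.1 ∨ (x.1 = y.1 ∧ H.Adj x.2 y.2)
  symm := by constructor; rintro x y (h | ⟨h1, h2⟩); exact Or.inl h.symm; exact Or.inr ⟨h1.symm, h2.symm⟩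
  loopless := by constructor; rintro x (h | ⟨-, h⟩) <;> exact h.ne rfl

/-- Direct (tensor) product. -/
def directProd {α β : Type*} (G : SimpleGraph α) (H : SimpleGraph β) :
    SimpleGraph (α × β) where
  Adj x y := G.Adj x.1 y.1 ∧ H.Adj x.2 y.2
  symm := by constructor; rintro x y ⟨h1, h2⟩; exact ⟨h1.symm, h2.symm⟩
  loopless := by constructor; rintro x ⟨h, -⟩; exact h.ne rfl

/-- Strong product. -/
def strongProd {α β : Type*} (G : SimpleGraph α) (H : SimpleGraph β) :
    SimpleGraph (α × β) :=
  (G.boxProd H) ⊔ (directProd G H)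

/-- Cartesian power: `d`-fold Cartesian (box) product of `G` with itself. -/
def boxPow {α : Type*} (G : SimpleGraph α) (d : ℕ) : SimpleGraph (Fin d → α) where
  Adj x y := ∃ i, G.Adj (x i) (y i) ∧ ∀ j, j ≠ i → x j = y j
  symm := by constructor; rintro x y ⟨i, h, hj⟩; exact ⟨i, h.symm, fun j hji => (hj j hji).symm⟩
  loopless := by constructor; rintro x ⟨i, h, -⟩; exact h.ne rfl

instance {α β : Type*} [DecidableEq α] (G : SimpleGraph α) (H : SimpleGraph β)
    [DecidableRel G.Adj] [DecidableRel H.Adj] : DecidableRel (lexProd G H).Adj :=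
  fun x y => inferInstanceAs (Decidable (_ ∨ _))

instance {α β : Type*} (G : SimpleGraph α) (H : SimpleGraph β)
    [DecidableRel G.Adj] [DecidableRel H.Adj] : DecidableRel (directProd G H).Adj :=
  fun x y => inferInstanceAs (Decidable (_ ∧ _))

instance {α β : Type*} [DecidableEq α] [DecidableEq β] (G : SimpleGraph α) (H : SimpleGraph β)
    [DecidableRel G.Adj] [DecidableRel H.Adj] : DecidableRel (G.boxProd H).Adj :=
  fun x y => decidable_of_iff _ (SimpleGraph.boxProd_adj).symm

instance {α β : Type*} [DecidableEq α] [DecidableEq β] (G : SimpleGraph α) (H : SimpleGraph β)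
    [DecidableRel G.Adj] [DecidableRel H.Adj] : DecidableRel (strongProd G H).Adj :=
  fun x y => inferInstanceAs (Decidable (_ ∨ _))

lemma walk_crosses_cut {V : Type*} {G : SimpleGraph V} {C : Set (Sym2 V)} :
    ∀ {u v : V} (w : G.Walk u v),
      (G.deleteEdges C).connectedComponentMk u ≠ (G.deleteEdges C).connectedComponentMk v →
      ∃ e ∈ w.edges, e ∈ C := by
  intro u v w
  induction w with
  | nil => intro h; exact absurd rfl h
  | @cons u b v h p ih =>
    intro hne
    by_cases hc : s(u, b) ∈ C
    · exact ⟨s(u, b), by simp [SimpleGraph.Walk.edges_cons], hc⟩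
    · have hadj : (G.deleteEdges C).Adj u b := by
        rw [SimpleGraph.deleteEdges_adj]; exact ⟨h, hc⟩
      have heq : (G.deleteEdges C).connectedComponentMk u
          = (G.deleteEdges C).connectedComponentMk b :=
        SimpleGraph.ConnectedComponent.sound hadj.reachable
      obtain ⟨e, he, hec⟩ := ih (heq ▸ hne)
      exact ⟨e, by simp [SimpleGraph.Walk.edges_cons, he], hec⟩

theorem edge_cut_separating {V : Type*} [Fintype V] (G : SimpleGraph V)
    (C : Finset (Sym2 V)) (hC : ↑C ⊆ G.edgeSet)
    (hdisc : ¬ (G.deleteEdges ↑C).Connected)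
    (M : (G.deleteEdges ↑C).ConnectedComponent)
    (n k j : ℕ) (φ : Fin n → V) (hinj : Function.Injective φ)
    (P : ∀ a b : Fin n, G.Walk (φ a) (φ b))
    (hpath : ∀ a b : Fin n, a < b → (P a b).IsPath)
    (hdisj : ∀ a b c d : Fin n, a < b → c < d → (a, b) ≠ (c, d) →
      List.Disjoint (P a b).edges (P c d).edges)
    (hk : Nat.card {i : Fin n // (G.deleteEdges ↑C).connectedComponentMk (φ i) ≠ M} = k)
    (hj : Nat.card {i : Fin n // (G.deleteEdges ↑C).connectedComponentMk (φ i) = M} = j) :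
    k * j ≤ C.card := by
  classical
  have cross : ∀ (a b : Fin n), (G.deleteEdges (↑C : Set (Sym2 V))).connectedComponentMk (φ a) ≠ M →
      (G.deleteEdges (↑C : Set (Sym2 V))).connectedComponentMk (φ b) = M →
      ∃ e ∈ C, e ∈ (P (a ⊓ b) (a ⊔ b)).edges := by
    intro a b ha hb
    have hcross : (G.deleteEdges (↑C : Set (Sym2 V))).connectedComponentMk (φ (a ⊓ b))
        ≠ (G.deleteEdges (↑C : Set (Sym2 V))).connectedComponentMk (φ (a ⊔ b)) := by
      rcases le_total a b with hle | hle
      · rw [inf_eq_left.mpr hle, sup_eq_right.mpr hle, hb]; exact ha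
      · rw [inf_eq_right.mpr hle, sup_eq_left.mpr hle, hb]
        exact fun h => ha h.symm
    obtain ⟨e, he, hec⟩ := walk_crosses_cut (P (a ⊓ b) (a ⊔ b)) hcross
    exact ⟨e, hec, he⟩
  have pairid : ∀ (a b c d : Fin n), (G.deleteEdges (↑C : Set (Sym2 V))).connectedComponentMk (φ a) ≠ M →
      (G.deleteEdges (↑C : Set (Sym2 V))).connectedComponentMk (φ b) = M → (G.deleteEdges (↑C : Set (Sym2 V))).connectedComponentMk (φ c) ≠ M →
      (G.deleteEdges (↑C : Set (Sym2 V))).connectedComponentMk (φ d) = M →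
      a ⊓ b = c ⊓ d → a ⊔ b = c ⊔ d → a = c ∧ b = d := by
    intro a b c d ha hb hc hd h1 h2
    rcases le_total a b with hab | hab <;> rcases le_total c d with hcd | hcd
    · rw [inf_eq_left.mpr hab, inf_eq_left.mpr hcd] at h1
      rw [sup_eq_right.mpr hab, sup_eq_right.mpr hcd] at h2
      exact ⟨h1, h2⟩
    · rw [inf_eq_left.mpr hab, inf_eq_right.mpr hcd] at h1
      exact absurd (h1 ▸ hd) ha
    · rw [inf_eq_right.mpr hab, inf_eq_left.mpr hcd] at h1
      exact absurd (h1.symm ▸ hb) hc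
    · rw [inf_eq_right.mpr hab, inf_eq_right.mpr hcd] at h1
      rw [sup_eq_left.mpr hab, sup_eq_left.mpr hcd] at h2
      exact ⟨h2, h1⟩
  set K := {i : Fin n // (G.deleteEdges (↑C : Set (Sym2 V))).connectedComponentMk (φ i) ≠ M} with hK
  set J := {i : Fin n // (G.deleteEdges (↑C : Set (Sym2 V))).connectedComponentMk (φ i) = M} with hJ
  let f : K × J → {e : Sym2 V // e ∈ C} := fun p =>
    ⟨(cross p.1.1 p.2.1 p.1.2 p.2.2).choose,
      (cross p.1.1 p.2.1 p.1.2 p.2.2).choose_spec.1⟩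
  have hf : Function.Injective f := by
    rintro ⟨a, b⟩ ⟨c, d⟩ hpq
    have hab : a.1 ≠ b.1 := fun h => a.2 (h ▸ b.2)
    have hcd : c.1 ≠ d.1 := fun h => c.2 (h ▸ d.2)
    have he1 := (cross a.1 b.1 a.2 b.2).choose_spec.2
    have he2 := (cross c.1 d.1 c.2 d.2).choose_spec.2
    have heq : (cross a.1 b.1 a.2 b.2).choose = (cross c.1 d.1 c.2 d.2).choose :=
      congrArg Subtype.val hpq
    rw [heq] at he1
    have hpair : (a.1 ⊓ b.1, a.1 ⊔ b.1) = (c.1 ⊓ d.1, c.1 ⊔ d.1) := by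
      by_contra hne
      exact hdisj _ _ _ _ (min_lt_max.mpr hab) (min_lt_max.mpr hcd) hne he1 he2
    obtain ⟨h1, h2⟩ := Prod.mk.injEq .. ▸ hpair
    obtain ⟨hac, hbd⟩ := pairid a.1 b.1 c.1 d.1 a.2 b.2 c.2 d.2
      (by exact congrArg Prod.fst hpair) (by exact congrArg Prod.snd hpair)
    exact Prod.ext (Subtype.ext hac) (Subtype.ext hbd)
  calc k * j = Nat.card (K × J) := by rw [Nat.card_prod, hk, hj]
    _ ≤ Nat.card {e : Sym2 V // e ∈ C} := Nat.card_le_card_of_injective f hf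
    _ = C.card := by simp [Nat.card_eq_fintype_card]
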